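/- Let d ≥ 2 and let Ω ⊂ ℝ^d be a bounded, open, convex, nonempty set. There exists a constant C > 0 such that for every u ∈ C¹(closure(Ω)) with ∫_Ω u dx = 0, one has ‖u‖_{L²(Ω)} ≤ C · sup { |∫_Ω ∇u · ∇φ dx| : φ ∈ C¹(closure(Ω)), ∫_Ω (|φ|² + |∇φ|²) dx ≤ 1 }. -/

import Mathlib

open MeasureTheory Set

lemma cs_sq {α : Type*} [MeasurableSpace α] {μ : Measure α} {f g : α → ℝ}
    (hf : Integrable (fun x => f x ^ 2) μ) (hg : Integrable (fun x => g x ^ 2) μ)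
    (hfg : Integrable (fun x => f x * g x) μ) :
    (∫ x, f x * g x ∂μ) ^ 2 ≤ (∫ x, f x ^ 2 ∂μ) * ∫ x, g x ^ 2 ∂μ := by
  set A := ∫ x, f x ^ 2 ∂μ with hA
  set B := ∫ x, g x ^ 2 ∂μ with hB
  set X := ∫ x, f x * g x ∂μ with hX
  have hA0 : 0 ≤ A := integral_nonneg fun x => sq_nonneg _
  have hB0 : 0 ≤ B := integral_nonneg fun x => sq_nonneg _
  rcases eq_or_lt_of_le hB0 with hB0' | hB0'
  · have hgz : (fun x => g x ^ 2) =ᵐ[μ] 0 := by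
      rw [← integral_eq_zero_iff_of_nonneg (fun x => sq_nonneg _) hg]; exact hB0'.symm
    have hfgz : (fun x => f x * g x) =ᵐ[μ] 0 := by
      filter_upwards [hgz] with x hx
      have hgx : g x = 0 := by simpa [pow_eq_zero_iff] using hx
      simp [hgx]
    have hX0 : X = 0 := by
      rw [hX, integral_congr_ae hfgz]; simp
    simp [hX0, ← hB0']
  · have key : 0 ≤ A - 2 * (X / B) * X + (X / B) ^ 2 * B := by
      have h1 : 0 ≤ ∫ x, (f x - (X / B) * g x) ^ 2 ∂μ := integral_nonneg fun x => sq_nonneg _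
      have h2 : ∫ x, (f x - (X / B) * g x) ^ 2 ∂μ = A - 2 * (X / B) * X + (X / B) ^ 2 * B := by
        have heq : (fun x => (f x - (X / B) * g x) ^ 2)
            = fun x => (f x ^ 2 - (2 * (X / B)) * (f x * g x)) + (X / B) ^ 2 * g x ^ 2 := by
          funext x; ring
        rw [heq,
          integral_add (f := fun x => f x ^ 2 - 2 * (X / B) * (f x * g x))
            (g := fun x => (X / B) ^ 2 * g x ^ 2) (hf.sub (hfg.const_mul _)) (hg.const_mul _),
          integral_sub hf (hfg.const_mul _), MeasureTheory.integral_const_mul, MeasureTheory.integral_const_mul]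
      linarith [h2 ▸ h1]
    have hB' : B ≠ 0 := ne_of_gt hB0'
    have hexp : A - 2 * (X / B) * X + (X / B) ^ 2 * B = A - X ^ 2 / B := by
      field_simp; ring
    rw [hexp] at key
    have : X ^ 2 / B ≤ A := by linarith
    calc X ^ 2 = (X ^ 2 / B) * B := by field_simp
    _ ≤ A * B := by exact mul_le_mul_of_nonneg_right this hB0

lemma cs_abs {α : Type*} [MeasurableSpace α] {μ : Measure α} {f g : α → ℝ}
    (hf : Integrable (fun x => f x ^ 2) μ) (hg : Integrable (fun x => g x ^ 2) μ)
    (hfg : Integrable (fun x => f x * g x) μ) :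
    |∫ x, f x * g x ∂μ| ≤ Real.sqrt (∫ x, f x ^ 2 ∂μ) * Real.sqrt (∫ x, g x ^ 2 ∂μ) := by
  have h := cs_sq hf hg hfg
  rw [← Real.sqrt_sq_eq_abs, ← Real.sqrt_mul (integral_nonneg fun x => sq_nonneg _)]
  exact Real.sqrt_le_sqrt h
open MeasureTheory Set

variable {d : ℕ}
local notation "E" => EuclideanSpace ℝ (Fin d)

lemma grad_inner (u : E → ℝ) (z w : E) :
    (inner ℝ (gradient u z) w : ℝ) = fderiv ℝ u z w := by
  simp [gradient, InnerProductSpace.toDual_symm_apply]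

lemma gradient_continuousOn {u : E → ℝ} {U : Set E} (hU : IsOpen U)
    (hu : ContDiffOn ℝ 1 u U) : ContinuousOn (gradient u) U := by
  have h := hu.continuousOn_fderiv_of_isOpen hU le_rfl
  exact ((InnerProductSpace.toDual ℝ (EuclideanSpace ℝ (Fin d))).symm.continuous).comp_continuousOn h

lemma seg_repr {Ω U : Set E} (hΩc : Convex ℝ Ω) (hΩU : Ω ⊆ U) (hU : IsOpen U)
    {u : E → ℝ} (hu : ContDiffOn ℝ 1 u U) {x y : E} (hx : x ∈ Ω) (hy : y ∈ Ω) :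
    u y - u x = (∫ t in (0:ℝ)..2⁻¹, (inner ℝ (gradient u (x + t • (y - x))) (y - x) : ℝ))
      - ∫ t in (0:ℝ)..2⁻¹, (inner ℝ (gradient u (y + t • (x - y))) (x - y) : ℝ) := by
  have hseg : ∀ a b : E, a ∈ Ω → b ∈ Ω → ∀ t ∈ Icc (0:ℝ) 1, a + t • (b - a) ∈ Ω := by
    intro a b ha hb t ht
    have : a + t • (b - a) = (1 - t) • a + t • b := by module
    rw [this]
    exact hΩc ha hb (by linarith [ht.2]) ht.1 (by ring)
  set q : ℝ → ℝ := fun t => (inner ℝ (gradient u (x + t • (y - x))) (y - x) : ℝ) with hq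
  have hγcont : Continuous (fun t : ℝ => x + t • (y - x)) := by fun_prop
  have hqc : ContinuousOn q (Icc (0:ℝ) 1) := by
    apply ContinuousOn.inner
    · apply (gradient_continuousOn hU hu).comp hγcont.continuousOn
      intro t ht
      exact hΩU (hseg x y hx hy t ht)
    · exact continuousOn_const
  have hderiv : ∀ t ∈ uIcc (0:ℝ) 1, HasDerivAt (fun s => u (x + s • (y - x))) (q t) t := by
    intro t ht
    rw [Set.uIcc_of_le (by norm_num : (0:ℝ) ≤ 1)] at ht
    have hz : x + t • (y - x) ∈ Ω := hseg x y hx hy t ht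
    have hd : DifferentiableAt ℝ u (x + t • (y - x)) :=
      (hu.differentiableOn one_ne_zero).differentiableAt (hU.mem_nhds (hΩU hz))
    have hγ : HasDerivAt (fun s : ℝ => x + s • (y - x)) (y - x) t := by
      simpa using ((hasDerivAt_id t).smul_const (y - x)).const_add x
    have hcomp := hd.hasFDerivAt.comp_hasDerivAt t hγ
    have h3 : q t = fderiv ℝ u (x + t • (y - x)) (y - x) := grad_inner u _ _
    rw [h3]
    exact hcomp
  have hInt : ∀ a b : ℝ, a ∈ Icc (0:ℝ) 1 → b ∈ Icc (0:ℝ) 1 → IntervalIntegrable q volume a b := by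
    intro a b ha hb
    apply ContinuousOn.intervalIntegrable
    exact hqc.mono (Set.uIcc_subset_Icc ha hb)
  have hftc : ∫ t in (0:ℝ)..1, q t = u y - u x := by
    have := intervalIntegral.integral_eq_sub_of_hasDerivAt hderiv
      (hInt 0 1 (by norm_num) (by norm_num))
    simpa using this
  have hsplit : ∫ t in (0:ℝ)..1, q t
      = (∫ t in (0:ℝ)..2⁻¹, q t) + ∫ t in (2⁻¹:ℝ)..1, q t :=
    (intervalIntegral.integral_add_adjacent_intervals
      (hInt 0 2⁻¹ (by norm_num) (by norm_num)) (hInt 2⁻¹ 1 (by norm_num) (by norm_num))).symm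
  have hcomp : ∫ t in (2⁻¹:ℝ)..1, q t = ∫ s in (0:ℝ)..2⁻¹, q (1 - s) := by
    rw [intervalIntegral.integral_comp_sub_left q 1]
    norm_num
  have hqflip : ∀ s : ℝ, q (1 - s) = - (inner ℝ (gradient u (y + s • (x - y))) (x - y) : ℝ) := by
    intro s
    have h1 : x + (1 - s) • (y - x) = y + s • (x - y) := by module
    have h2 : y - x = -(x - y) := by abel
    simp only [hq]
    rw [h1, h2, inner_neg_right]
  rw [← hftc, hsplit, hcomp]
  simp only [hqflip, intervalIntegral.integral_neg]
  ring

section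
open ENNReal
variable {d : ℕ}

section
variable {Ω U : Set (EuclideanSpace ℝ (Fin d))} (hΩo : IsOpen Ω) (hΩb : Bornology.IsBounded Ω)
  (hΩc : Convex ℝ Ω) (hΩne : Ω.Nonempty) (hU : IsOpen U)
  (hΩU : closure Ω ⊆ U) {u : EuclideanSpace ℝ (Fin d) → ℝ} (hu : ContDiffOn ℝ 1 u U)

lemma grad_meas (u : EuclideanSpace ℝ (Fin d) → ℝ) : Measurable (gradient u) := by
  have h1 : Measurable (fderiv ℝ u) := measurable_fderiv ℝ u
  exact ((InnerProductSpace.toDual ℝ (EuclideanSpace ℝ (Fin d))).symm.continuous.measurable).comp h1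

include hΩb hU hΩU in
lemma integ_on {f : EuclideanSpace ℝ (Fin d) → ℝ} (hf : ContinuousOn f U) :
    IntegrableOn f Ω volume :=
  ((hf.mono hΩU).integrableOn_compact hΩb.isCompact_closure).mono_set subset_closure

include hΩo hΩb hΩc hΩne hU hΩU hu in
set_option maxHeartbeats 2000000 in
lemma poincare (hmean : (∫ x in Ω, u x) = 0) :
    ∫ x in Ω, (u x) ^ 2
      ≤ 2 ^ d * (Metric.diam Ω + 1) ^ 2 * ∫ x in Ω, ‖gradient u x‖ ^ 2 := by
  classical
  have hΩm : MeasurableSet Ω := hΩo.measurableSet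
  have hsub : Ω ⊆ U := subset_closure.trans hΩU
  have hucont : ContinuousOn u U := hu.continuousOn
  have hgradc : ContinuousOn (gradient u) U := gradient_continuousOn hU hu
  set g : EuclideanSpace ℝ (Fin d) → ℝ := fun z => ‖gradient u z‖ ^ 2 with hgdef
  have hgcont : ContinuousOn g U := (hgradc.norm).pow 2
  have hgnonneg : ∀ z, 0 ≤ g z := fun z => sq_nonneg _
  set G : EuclideanSpace ℝ (Fin d) → ℝ := Ω.indicator g with hGdef
  have hGnonneg : ∀ z, 0 ≤ G z := fun z => Set.indicator_nonneg (fun w _ => hgnonneg w) z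
  have hgmeas : Measurable g := ((grad_meas u).norm).pow_const 2
  have hGmeas : Measurable G := hgmeas.indicator hΩm
  have hu_int : IntegrableOn u Ω volume := integ_on hΩb hU hΩU hucont
  have hu2_int : IntegrableOn (fun x => u x ^ 2) Ω volume := integ_on hΩb hU hΩU (hucont.pow 2)
  have hg_int : IntegrableOn g Ω volume := integ_on hΩb hU hΩU hgcont
  -- diameter bound
  set D : ℝ := Metric.diam Ω + 1 with hDdef
  have hD0 : 0 < D := by have := Metric.diam_nonneg (s := Ω); simp only [hDdef]; linarith
  have hdist : ∀ x ∈ Ω, ∀ y ∈ Ω, ‖y - x‖ ≤ D := by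
    intro x hx y hy
    have := Metric.dist_le_diam_of_mem hΩb hy hx
    rw [dist_eq_norm] at this
    simp only [hDdef]
    linarith [Metric.diam_nonneg (s := Ω)]
  -- measure facts
  have hμfin : volume Ω ≠ ⊤ := hΩb.measure_lt_top.ne
  set m : ℝ := (volume Ω).toReal with hmdef
  have hm0 : 0 < m := ENNReal.toReal_pos (hΩo.measure_pos volume hΩne).ne' hμfin
  -- A and J
  set A : EuclideanSpace ℝ (Fin d) → EuclideanSpace ℝ (Fin d) → ℝ := fun x y =>
    ∫ t in (0:ℝ)..2⁻¹, (inner ℝ (gradient u (x + t • (y - x))) (y - x) : ℝ) with hAdef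
  set J : EuclideanSpace ℝ (Fin d) → EuclideanSpace ℝ (Fin d) → ℝ := fun x y =>
    ∫ t in Ioc (0:ℝ) 2⁻¹, G ((1 - t) • x + t • y) with hJdef
  have hseg : ∀ x ∈ Ω, ∀ y ∈ Ω, ∀ t ∈ Icc (0:ℝ) 1, (1 - t) • x + t • y ∈ Ω := by
    intro x hx y hy t ht
    exact hΩc hx hy (by linarith [ht.2]) ht.1 (by ring)
  have hJnonneg : ∀ x y, 0 ≤ J x y := fun x y =>
    integral_nonneg fun t => hGnonneg _
  -- continuity of t ↦ g((1-t)x+ty) on Icc 0 1 for x y ∈ Ω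
  have hgseg_cont : ∀ x ∈ Ω, ∀ y ∈ Ω,
      ContinuousOn (fun t : ℝ => g ((1 - t) • x + t • y)) (Icc (0:ℝ) 1) := by
    intro x hx y hy
    apply hgcont.comp (by fun_prop)
    intro t ht
    exact hsub (hseg x hx y hy t ht)
  have hGseg_int : ∀ x ∈ Ω, ∀ y ∈ Ω,
      IntegrableOn (fun t : ℝ => G ((1 - t) • x + t • y)) (Ioc (0:ℝ) 2⁻¹) volume := by
    intro x hx y hy
    have h1 : IntegrableOn (fun t : ℝ => g ((1 - t) • x + t • y)) (Ioc (0:ℝ) 2⁻¹) volume := by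
      apply (((hgseg_cont x hx y hy).mono (Icc_subset_Icc le_rfl (by norm_num))).integrableOn_compact
        isCompact_Icc).mono_set Ioc_subset_Icc_self
    apply h1.congr_fun ?_ measurableSet_Ioc
    intro t ht
    have hmem : (1 - t) • x + t • y ∈ Ω :=
      hseg x hx y hy t ⟨le_of_lt ht.1, le_trans ht.2 (by norm_num)⟩
    simp [hGdef, Set.indicator_of_mem hmem]
  -- Cauchy–Schwarz bound for A
  have hAJ : ∀ x ∈ Ω, ∀ y ∈ Ω, (A x y) ^ 2 ≤ 2⁻¹ * (D ^ 2 * J x y) := by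
    intro x hx y hy
    set q : ℝ → ℝ := fun t => (inner ℝ (gradient u (x + t • (y - x))) (y - x) : ℝ) with hqdef
    have hqc : ContinuousOn q (Icc (0:ℝ) 2⁻¹) := by
      apply ContinuousOn.inner ?_ continuousOn_const
      apply (gradient_continuousOn hU hu).comp (by fun_prop)
      intro t ht
      show x + t • (y - x) ∈ U
      have : x + t • (y - x) = (1 - t) • x + t • y := by module
      rw [this]
      exact hsub (hseg x hx y hy t ⟨ht.1, le_trans ht.2 (by norm_num)⟩)
    have hq_int : IntegrableOn q (Ioc (0:ℝ) 2⁻¹) volume :=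
      (hqc.integrableOn_compact isCompact_Icc).mono_set Ioc_subset_Icc_self
    have hq2_int : IntegrableOn (fun t => q t ^ 2) (Ioc (0:ℝ) 2⁻¹) volume :=
      ((hqc.pow 2).integrableOn_compact isCompact_Icc).mono_set Ioc_subset_Icc_self
    have hAset : A x y = ∫ t in Ioc (0:ℝ) 2⁻¹, q t := by
      rw [hAdef]
      exact intervalIntegral.integral_of_le (by norm_num)
    have hcs : (∫ t in Ioc (0:ℝ) 2⁻¹, q t * 1) ^ 2
        ≤ (∫ t in Ioc (0:ℝ) 2⁻¹, q t ^ 2) * ∫ t in Ioc (0:ℝ) 2⁻¹, (1:ℝ) ^ 2 := by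
      apply cs_sq hq2_int (by simpa using integrableOn_const (by simp [Real.volume_Ioc]))
        (by simp only [mul_one]; exact hq_int)
    have hone : (∫ t in Ioc (0:ℝ) 2⁻¹, (1:ℝ) ^ 2) = 2⁻¹ := by
      simp [Real.volume_Ioc]
    have hq2_le : (∫ t in Ioc (0:ℝ) 2⁻¹, q t ^ 2) ≤ D ^ 2 * J x y := by
      rw [hJdef]
      rw [← MeasureTheory.integral_const_mul]
      apply setIntegral_mono_on hq2_int ((hGseg_int x hx y hy).const_mul _) measurableSet_Ioc
      intro t ht
      have htI : t ∈ Icc (0:ℝ) 1 := ⟨le_of_lt ht.1, le_trans ht.2 (by norm_num)⟩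
      have hmem : (1 - t) • x + t • y ∈ Ω := hseg x hx y hy t htI
      have hγ : x + t • (y - x) = (1 - t) • x + t • y := by module
      have h1 : |q t| ≤ ‖gradient u ((1 - t) • x + t • y)‖ * ‖y - x‖ := by
        rw [hqdef]; simp only [hγ]
        exact abs_real_inner_le_norm _ _
      have h2 : q t ^ 2 ≤ (‖gradient u ((1 - t) • x + t • y)‖ * ‖y - x‖) ^ 2 := by
        rw [← sq_abs]
        exact pow_le_pow_left₀ (abs_nonneg _) h1 2
      have h3 : G ((1 - t) • x + t • y) = g ((1 - t) • x + t • y) :=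
        Set.indicator_of_mem hmem _
      rw [h3, hgdef]
      calc q t ^ 2 ≤ (‖gradient u ((1 - t) • x + t • y)‖ * ‖y - x‖) ^ 2 := h2
      _ = ‖gradient u ((1 - t) • x + t • y)‖ ^ 2 * ‖y - x‖ ^ 2 := by ring
      _ ≤ ‖gradient u ((1 - t) • x + t • y)‖ ^ 2 * D ^ 2 := by
          apply mul_le_mul_of_nonneg_left ?_ (sq_nonneg _)
          exact pow_le_pow_left₀ (norm_nonneg _) (hdist x hx y hy) 2
      _ = D ^ 2 * ‖gradient u ((1 - t) • x + t • y)‖ ^ 2 := by ring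
    calc (A x y) ^ 2 = (∫ t in Ioc (0:ℝ) 2⁻¹, q t * 1) ^ 2 := by rw [hAset]; simp
    _ ≤ (∫ t in Ioc (0:ℝ) 2⁻¹, q t ^ 2) * ∫ t in Ioc (0:ℝ) 2⁻¹, (1:ℝ) ^ 2 := hcs
    _ = 2⁻¹ * ∫ t in Ioc (0:ℝ) 2⁻¹, q t ^ 2 := by rw [hone]; ring
    _ ≤ 2⁻¹ * (D ^ 2 * J x y) := by
        apply mul_le_mul_of_nonneg_left hq2_le (by norm_num)
  -- pointwise bound
  have hptw : ∀ x ∈ Ω, ∀ y ∈ Ω, (u x - u y) ^ 2 ≤ D ^ 2 * (J x y + J y x) := by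
    intro x hx y hy
    have hrepr := seg_repr hΩc hsub hU hu hx hy
    have hA_apply : ∀ a b : EuclideanSpace ℝ (Fin d), A a b
        = ∫ t in (0:ℝ)..2⁻¹, (inner ℝ (gradient u (a + t • (b - a))) (b - a) : ℝ) :=
      fun a b => rfl
    have hxy : u x - u y = A y x - A x y := by
      rw [hA_apply, hA_apply]
      linarith [hrepr]
    have h1 := hAJ x hx y hy
    have h2 := hAJ y hy x hx
    calc (u x - u y) ^ 2 = (A y x - A x y) ^ 2 := by rw [hxy]
    _ ≤ 2 * A x y ^ 2 + 2 * A y x ^ 2 := by nlinarith [sq_nonneg (A x y + A y x)]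
    _ ≤ 2 * (2⁻¹ * (D ^ 2 * J x y)) + 2 * (2⁻¹ * (D ^ 2 * J y x)) := by linarith
    _ = D ^ 2 * (J x y + J y x) := by ring
  -- product measure setup
  set ν : Measure (EuclideanSpace ℝ (Fin d)) := volume.restrict Ω with hνdef
  set P : Measure (EuclideanSpace ℝ (Fin d) × EuclideanSpace ℝ (Fin d)) := ν.prod ν with hPdef
  have hP : P = (volume.prod volume).restrict (Ω ×ˢ Ω) := Measure.prod_restrict Ω Ω
  haveI hνfin : IsFiniteMeasure ν := ⟨by rw [hνdef, Measure.restrict_apply_univ]; exact hΩb.measure_lt_top⟩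
  have hone' : ∫ _x, (1:ℝ) ∂ν = m := by simp [hνdef, hmdef, measureReal_def]
  have hY0 : 0 ≤ ∫ x, g x ∂ν := integral_nonneg fun z => hgnonneg z
  -- Step 1 : expansion of the double integral
  have hprod : ∫ z, (u z.1 - u z.2) ^ 2 ∂P = 2 * m * ∫ x, u x ^ 2 ∂ν := by
    have hI1 : Integrable (fun z : EuclideanSpace ℝ (Fin d) × EuclideanSpace ℝ (Fin d) =>
        (u z.1) ^ 2 * (1:ℝ)) (ν.prod ν) := hu2_int.mul_prod (integrable_const 1)
    have hI2 : Integrable (fun z : EuclideanSpace ℝ (Fin d) × EuclideanSpace ℝ (Fin d) =>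
        u z.1 * u z.2) (ν.prod ν) := hu_int.mul_prod hu_int
    have hI3 : Integrable (fun z : EuclideanSpace ℝ (Fin d) × EuclideanSpace ℝ (Fin d) =>
        (1:ℝ) * (u z.2) ^ 2) (ν.prod ν) := (integrable_const 1).mul_prod hu2_int
    have hexp : (fun z : EuclideanSpace ℝ (Fin d) × EuclideanSpace ℝ (Fin d) =>
        (u z.1 - u z.2) ^ 2)
        = fun z => ((u z.1) ^ 2 * 1 - 2 * (u z.1 * u z.2)) + 1 * (u z.2) ^ 2 := by
      funext z; ring
    rw [hPdef, hexp,
      integral_add (μ := ν.prod ν)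
        (f := fun z : EuclideanSpace ℝ (Fin d) × EuclideanSpace ℝ (Fin d) =>
          (u z.1) ^ 2 * 1 - 2 * (u z.1 * u z.2))
        (g := fun z : EuclideanSpace ℝ (Fin d) × EuclideanSpace ℝ (Fin d) =>
          1 * (u z.2) ^ 2) (hI1.sub (hI2.const_mul 2)) hI3,
      integral_sub hI1 (hI2.const_mul 2), MeasureTheory.integral_const_mul,
      integral_prod_mul (f := fun x : EuclideanSpace ℝ (Fin d) => u x ^ 2)
        (g := fun _ : EuclideanSpace ℝ (Fin d) => (1:ℝ)),
      integral_prod_mul (f := u) (g := u),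
      integral_prod_mul (f := fun _ : EuclideanSpace ℝ (Fin d) => (1:ℝ))
        (g := fun x : EuclideanSpace ℝ (Fin d) => u x ^ 2), hone', hmean]
    ring
  -- Step 2: to lintegral
  have hSM : AEStronglyMeasurable (fun z : EuclideanSpace ℝ (Fin d) × EuclideanSpace ℝ (Fin d) =>
      (u z.1 - u z.2) ^ 2) P := by
    rw [hP]
    apply ContinuousOn.aestronglyMeasurable ?_ (hΩm.prod hΩm)
    have h1 : ContinuousOn (fun z : EuclideanSpace ℝ (Fin d) × EuclideanSpace ℝ (Fin d) =>
        u z.1) (Ω ×ˢ Ω) := hucont.comp continuous_fst.continuousOn (fun z hz => hsub hz.1)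
    have h2 : ContinuousOn (fun z : EuclideanSpace ℝ (Fin d) × EuclideanSpace ℝ (Fin d) =>
        u z.2) (Ω ×ˢ Ω) := hucont.comp continuous_snd.continuousOn (fun z hz => hsub hz.2)
    exact (h1.sub h2).pow 2
  have hlin : ∫ z, (u z.1 - u z.2) ^ 2 ∂P
      = (∫⁻ z, ENNReal.ofReal ((u z.1 - u z.2) ^ 2) ∂P).toReal :=
    integral_eq_lintegral_of_nonneg_ae (Filter.Eventually.of_forall fun z => sq_nonneg _) hSM
  -- Step 3: majorant
  set Jhat : EuclideanSpace ℝ (Fin d) × EuclideanSpace ℝ (Fin d) → ℝ≥0∞ := fun z =>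
    ∫⁻ t in Ioc (0:ℝ) 2⁻¹, ENNReal.ofReal (G ((1 - t) • z.1 + t • z.2)) with hJhatdef
  have haff : Measurable (fun p : (EuclideanSpace ℝ (Fin d) × EuclideanSpace ℝ (Fin d)) × ℝ =>
      ENNReal.ofReal (G ((1 - p.2) • p.1.1 + p.2 • p.1.2))) := by
    apply ENNReal.measurable_ofReal.comp
    apply hGmeas.comp
    fun_prop
  have hJhat_meas : Measurable Jhat := haff.lintegral_prod_right'
  have hofJ : ∀ x ∈ Ω, ∀ y ∈ Ω, ENNReal.ofReal (J x y) = Jhat (x, y) := by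
    intro x hx y hy
    simp only [hJdef, hJhatdef]
    exact ofReal_integral_eq_lintegral_ofReal (hGseg_int x hx y hy)
      (Filter.Eventually.of_forall fun t => hGnonneg _)
  have hae : ∀ᵐ z ∂P, z ∈ Ω ×ˢ Ω := by rw [hP]; exact ae_restrict_mem (hΩm.prod hΩm)
  have hptw' : ∀ᵐ z ∂P, ENNReal.ofReal ((u z.1 - u z.2) ^ 2)
      ≤ ENNReal.ofReal (D ^ 2) * (Jhat z + Jhat z.swap) := by
    filter_upwards [hae] with z hz
    have h1 := hptw z.1 hz.1 z.2 hz.2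
    calc ENNReal.ofReal ((u z.1 - u z.2) ^ 2)
        ≤ ENNReal.ofReal (D ^ 2 * (J z.1 z.2 + J z.2 z.1)) := ENNReal.ofReal_le_ofReal h1
    _ = ENNReal.ofReal (D ^ 2) * (ENNReal.ofReal (J z.1 z.2) + ENNReal.ofReal (J z.2 z.1)) := by
        rw [ENNReal.ofReal_mul (sq_nonneg D), ENNReal.ofReal_add (hJnonneg _ _) (hJnonneg _ _)]
    _ = ENNReal.ofReal (D ^ 2) * (Jhat z + Jhat z.swap) := by
        rw [hofJ z.1 hz.1 z.2 hz.2, hofJ z.2 hz.2 z.1 hz.1]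
        rfl
  have hswap : ∫⁻ z, Jhat z.swap ∂P = ∫⁻ z, Jhat z ∂P := lintegral_prod_swap Jhat
  have hl1 : (∫⁻ z, ENNReal.ofReal ((u z.1 - u z.2) ^ 2) ∂P)
      ≤ ENNReal.ofReal (D ^ 2) * (2 * ∫⁻ z, Jhat z ∂P) := by
    calc (∫⁻ z, ENNReal.ofReal ((u z.1 - u z.2) ^ 2) ∂P)
        ≤ ∫⁻ z, ENNReal.ofReal (D ^ 2) * (Jhat z + Jhat z.swap) ∂P := lintegral_mono_ae hptw'
    _ = ENNReal.ofReal (D ^ 2) * ((∫⁻ z, Jhat z ∂P) + ∫⁻ z, Jhat z.swap ∂P) := by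
        have hmeas2 : Measurable (fun z : EuclideanSpace ℝ (Fin d) × EuclideanSpace ℝ (Fin d) =>
            Jhat z + Jhat z.swap) := hJhat_meas.add (hJhat_meas.comp measurable_swap)
        rw [lintegral_const_mul (f := fun z => Jhat z + Jhat z.swap) _ hmeas2,
          lintegral_add_left hJhat_meas (fun z => Jhat z.swap)]
    _ = ENNReal.ofReal (D ^ 2) * (2 * ∫⁻ z, Jhat z ∂P) := by
        rw [hswap, two_mul]
  -- Step 4: scaling bound
  set Ghat : ℝ≥0∞ := ∫⁻ w, ENNReal.ofReal (G w) with hGhatdef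
  have hGhat_eq : Ghat = ENNReal.ofReal (∫ x, g x ∂ν) := by
    have h1 : (fun w => ENNReal.ofReal (G w))
        = Ω.indicator (fun z => ENNReal.ofReal (g z)) := by
      funext w
      by_cases hw : w ∈ Ω <;>
        simp [hGdef, Set.indicator_of_mem, Set.indicator_of_notMem, hw]
    rw [hGhatdef, h1, lintegral_indicator hΩm]
    exact (ofReal_integral_eq_lintegral_ofReal hg_int
      (Filter.Eventually.of_forall fun z => hgnonneg z)).symm
  have hGhat_fin : Ghat ≠ ⊤ := by rw [hGhat_eq]; exact ENNReal.ofReal_ne_top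
  have hGofmeas : Measurable fun w => ENNReal.ofReal (G w) :=
    ENNReal.measurable_ofReal.comp hGmeas
  have hscale : ∀ t ∈ Ioc (0:ℝ) 2⁻¹, ∀ y : EuclideanSpace ℝ (Fin d),
      (∫⁻ x, ENNReal.ofReal (G ((1 - t) • x + t • y)) ∂ν)
        ≤ ENNReal.ofReal (2 ^ d) * Ghat := by
    intro t ht y
    have ht2 : t ≤ 2⁻¹ := ht.2
    have hc0 : (0:ℝ) < 1 - t := by norm_num at ht2 ⊢; linarith
    have hchalf : (2:ℝ)⁻¹ ≤ 1 - t := by linarith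
    calc ∫⁻ x, ENNReal.ofReal (G ((1 - t) • x + t • y)) ∂ν
        ≤ ∫⁻ x, ENNReal.ofReal (G ((1 - t) • x + t • y)) ∂volume :=
          lintegral_mono' Measure.restrict_le_self le_rfl
    _ = ∫⁻ w, ENNReal.ofReal (G (w + t • y))
          ∂(Measure.map (fun x : EuclideanSpace ℝ (Fin d) => (1 - t) • x) volume) :=
        (lintegral_map (hGofmeas.comp (measurable_id.add_const (t • y)))
          (measurable_id.const_smul (1 - t))).symm
    _ = ENNReal.ofReal |((1 - t) ^ d)⁻¹| * Ghat := by
        rw [Measure.map_addHaar_smul volume hc0.ne', lintegral_smul_measure,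
          lintegral_add_right_eq_self (fun w => ENNReal.ofReal (G w)) (t • y),
          finrank_euclideanSpace_fin]
        rfl
    _ ≤ ENNReal.ofReal (2 ^ d) * Ghat := by
        apply mul_le_mul_left (ENNReal.ofReal_le_ofReal ?_)
        rw [abs_of_nonneg (by positivity)]
        have h1 : (2:ℝ)⁻¹ ^ d ≤ (1 - t) ^ d := pow_le_pow_left₀ (by norm_num) hchalf d
        have h2 : ((1 - t) ^ d)⁻¹ ≤ ((2:ℝ)⁻¹ ^ d)⁻¹ :=
          inv_anti₀ (by positivity) h1
        simpa [inv_pow] using h2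
  have hT : (∫⁻ z, Jhat z ∂P)
      ≤ ENNReal.ofReal (2 ^ d) * Ghat * volume Ω * ENNReal.ofReal 2⁻¹ := by
    have hswap2 : ∫⁻ z, Jhat z ∂P
        = ∫⁻ t in Ioc (0:ℝ) 2⁻¹,
            ∫⁻ z, ENNReal.ofReal (G ((1 - t) • z.1 + t • z.2)) ∂P ∂volume := by
      simp only [hJhatdef]
      exact lintegral_lintegral_swap haff.aemeasurable
    rw [hswap2]
    have hfmeas : ∀ t : ℝ, Measurable (fun z : EuclideanSpace ℝ (Fin d) × EuclideanSpace ℝ (Fin d) =>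
        ENNReal.ofReal (G ((1 - t) • z.1 + t • z.2))) := by
      intro t
      apply ENNReal.measurable_ofReal.comp
      apply hGmeas.comp
      fun_prop
    have hinner : ∀ t ∈ Ioc (0:ℝ) 2⁻¹,
        (∫⁻ z, ENNReal.ofReal (G ((1 - t) • z.1 + t • z.2)) ∂P)
          ≤ ENNReal.ofReal (2 ^ d) * Ghat * volume Ω := by
      intro t ht
      rw [hPdef, lintegral_prod_symm _ (hfmeas t).aemeasurable]
      calc ∫⁻ y, ∫⁻ x, ENNReal.ofReal (G ((1 - t) • x + t • y)) ∂ν ∂ν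
          ≤ ∫⁻ _y, ENNReal.ofReal (2 ^ d) * Ghat ∂ν :=
            lintegral_mono fun y => hscale t ht y
      _ = ENNReal.ofReal (2 ^ d) * Ghat * volume Ω := by
          rw [lintegral_const, hνdef, Measure.restrict_apply_univ]
    calc (∫⁻ t in Ioc (0:ℝ) 2⁻¹,
            ∫⁻ z, ENNReal.ofReal (G ((1 - t) • z.1 + t • z.2)) ∂P ∂volume)
        ≤ ∫⁻ _t in Ioc (0:ℝ) 2⁻¹, ENNReal.ofReal (2 ^ d) * Ghat * volume Ω ∂volume := by
          apply lintegral_mono_ae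
          filter_upwards [ae_restrict_mem measurableSet_Ioc] with t ht
          exact hinner t ht
    _ = ENNReal.ofReal (2 ^ d) * Ghat * volume Ω * ENNReal.ofReal 2⁻¹ := by
        rw [setLIntegral_const, Real.volume_Ioc]
        norm_num
  -- assemble
  have hRHSfin : ENNReal.ofReal (D ^ 2)
      * (2 * (ENNReal.ofReal (2 ^ d) * Ghat * volume Ω * ENNReal.ofReal 2⁻¹)) ≠ ⊤ := by
    apply ENNReal.mul_ne_top ENNReal.ofReal_ne_top
    apply ENNReal.mul_ne_top (by norm_num)
    apply ENNReal.mul_ne_top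
    apply ENNReal.mul_ne_top
    exact ENNReal.mul_ne_top ENNReal.ofReal_ne_top hGhat_fin
    exact hμfin
    exact ENNReal.ofReal_ne_top
  have hchain : 2 * m * ∫ x, u x ^ 2 ∂ν
      ≤ (ENNReal.ofReal (D ^ 2)
          * (2 * (ENNReal.ofReal (2 ^ d) * Ghat * volume Ω * ENNReal.ofReal 2⁻¹))).toReal := by
    rw [← hprod, hlin]
    apply ENNReal.toReal_mono hRHSfin
    refine le_trans hl1 ?_
    exact mul_le_mul_right (mul_le_mul_right hT 2) _
  have hcompute : (ENNReal.ofReal (D ^ 2)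
      * (2 * (ENNReal.ofReal (2 ^ d) * Ghat * volume Ω * ENNReal.ofReal 2⁻¹))).toReal
      = D ^ 2 * (2 * ((2 ^ d) * (∫ x, g x ∂ν) * m * 2⁻¹)) := by
    rw [hGhat_eq]
    rw [ENNReal.toReal_mul, ENNReal.toReal_mul, ENNReal.toReal_mul, ENNReal.toReal_mul,
      ENNReal.toReal_mul, ENNReal.toReal_ofReal (sq_nonneg D),
      ENNReal.toReal_ofReal (by positivity : (0:ℝ) ≤ 2 ^ d),
      ENNReal.toReal_ofReal hY0, ENNReal.toReal_ofReal (by norm_num : (0:ℝ) ≤ 2⁻¹)]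
    norm_num [hmdef]
  rw [hcompute] at hchain
  have hgoal : ∫ x, u x ^ 2 ∂ν ≤ 2 ^ d * D ^ 2 * ∫ x, g x ∂ν := by
    have hX0 : 0 ≤ ∫ x, u x ^ 2 ∂ν := integral_nonneg fun z => sq_nonneg _
    have h5 : 2 * m * ∫ x, u x ^ 2 ∂ν ≤ 2 ^ d * D ^ 2 * (∫ x, g x ∂ν) * m := by
      ring_nf at hchain ⊢
      linarith [hchain]
    have h6 : m * ∫ x, u x ^ 2 ∂ν ≤ m * (2 ^ d * D ^ 2 * ∫ x, g x ∂ν) := by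
      have hmx : 0 ≤ m * ∫ x, u x ^ 2 ∂ν := mul_nonneg hm0.le hX0
      ring_nf at h5 ⊢
      linarith [h5, hmx]
    exact le_of_mul_le_mul_left h6 hm0
  calc ∫ x, u x ^ 2 ∂ν ≤ 2 ^ d * D ^ 2 * ∫ x, g x ∂ν := hgoal
  _ = 2 ^ d * (Metric.diam Ω + 1) ^ 2 * ∫ x, g x ∂ν := by rw [hDdef]


end
end


open ENNReal in
set_option maxHeartbeats 2000000 in
/-- For a bounded convex open set `Ω ⊂ ℝ^d`, the `L²` norm of a mean-zero `C¹(closure Ω)`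
function is controlled by the dual-`H¹` norm of its gradient:
`‖u‖_{L²(Ω)} ≤ C sup { |∫_Ω ∇u·∇φ| : φ ∈ C¹(closure Ω), ∫_Ω (|φ|² + |∇φ|²) ≤ 1 }`. -/
theorem L2_le_dualH1_of_gradient
    (d : ℕ) (hd : 2 ≤ d)
    (Ω : Set (EuclideanSpace ℝ (Fin d)))
    (hΩo : IsOpen Ω) (hΩb : Bornology.IsBounded Ω) (hΩc : Convex ℝ Ω) (hΩne : Ω.Nonempty) :
    ∃ C : ℝ, 0 < C ∧
      ∀ u : EuclideanSpace ℝ (Fin d) → ℝ,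
        (∃ U : Set (EuclideanSpace ℝ (Fin d)), IsOpen U ∧ closure Ω ⊆ U ∧ ContDiffOn ℝ 1 u U) →
        (∫ x in Ω, u x) = 0 →
        Real.sqrt (∫ x in Ω, (u x) ^ 2) ≤
          C * sSup {r : ℝ | ∃ φ : EuclideanSpace ℝ (Fin d) → ℝ,
            (∃ U : Set (EuclideanSpace ℝ (Fin d)),
              IsOpen U ∧ closure Ω ⊆ U ∧ ContDiffOn ℝ 1 φ U) ∧
            (∫ x in Ω, ((φ x) ^ 2 + ‖gradient φ x‖ ^ 2)) ≤ 1 ∧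
            r = |∫ x in Ω, (inner ℝ (gradient u x) (gradient φ x) : ℝ)|} := by
  classical
  have hΩm : MeasurableSet Ω := hΩo.measurableSet
  set K : ℝ := 2 ^ d * (Metric.diam Ω + 1) ^ 2 with hKdef
  have hK0 : 0 < K := by
    have := Metric.diam_nonneg (s := Ω)
    positivity
  refine ⟨Real.sqrt K * Real.sqrt (K + 1) + 1, by positivity, ?_⟩
  intro u ⟨U, hU, hΩU, hu⟩ hmean
  set S : Set ℝ := {r : ℝ | ∃ φ : EuclideanSpace ℝ (Fin d) → ℝ,
    (∃ U : Set (EuclideanSpace ℝ (Fin d)),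
      IsOpen U ∧ closure Ω ⊆ U ∧ ContDiffOn ℝ 1 φ U) ∧
    (∫ x in Ω, ((φ x) ^ 2 + ‖gradient φ x‖ ^ 2)) ≤ 1 ∧
    r = |∫ x in Ω, (inner ℝ (gradient u x) (gradient φ x) : ℝ)|} with hSdef
  -- basic integrability for u
  have hgradcu : ContinuousOn (gradient u) U := gradient_continuousOn hU hu
  have hu2_int : IntegrableOn (fun x => u x ^ 2) Ω volume :=
    integ_on hΩb hU hΩU (hu.continuousOn.pow 2)
  have hgu2_int : IntegrableOn (fun x => ‖gradient u x‖ ^ 2) Ω volume :=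
    integ_on hΩb hU hΩU (hgradcu.norm.pow 2)
  have hNsq0 : 0 ≤ ∫ x in Ω, ‖gradient u x‖ ^ 2 := integral_nonneg fun x => sq_nonneg _
  have hL0 : 0 ≤ ∫ x in Ω, u x ^ 2 := integral_nonneg fun x => sq_nonneg _
  -- 0 ∈ S
  have h0S : (0:ℝ) ∈ S := by
    refine ⟨fun _ => 0, ⟨Set.univ, isOpen_univ, Set.subset_univ _, contDiffOn_const⟩, ?_, ?_⟩
    · have : ∀ x : EuclideanSpace ℝ (Fin d),
          ((fun _ => (0:ℝ)) x) ^ 2 + ‖gradient (fun _ => (0:ℝ)) x‖ ^ 2 = 0 := by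
        intro x
        simp [gradient_const]
      rw [setIntegral_congr_fun hΩm (fun x _ => this x)]
      simp
    · simp [gradient_const]
  -- S is bounded above by √(∫‖∇u‖²)
  have hbdd : BddAbove S := by
    refine ⟨Real.sqrt (∫ x in Ω, ‖gradient u x‖ ^ 2), ?_⟩
    rintro r ⟨φ, ⟨V, hV, hΩV, hφ⟩, hconstr, hr⟩
    set W := U ∩ V with hWdef
    have hW : IsOpen W := hU.inter hV
    have hΩW : closure Ω ⊆ W := Set.subset_inter hΩU hΩV
    have hgradcφ : ContinuousOn (gradient φ) V := gradient_continuousOn hV hφ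
    have hφ2_int : IntegrableOn (fun x => φ x ^ 2) Ω volume :=
      integ_on hΩb hV hΩV (hφ.continuousOn.pow 2)
    have hgφ2_int : IntegrableOn (fun x => ‖gradient φ x‖ ^ 2) Ω volume :=
      integ_on hΩb hV hΩV (hgradcφ.norm.pow 2)
    have hsum_int : IntegrableOn (fun x => φ x ^ 2 + ‖gradient φ x‖ ^ 2) Ω volume :=
      hφ2_int.add hgφ2_int
    have hgφ2_le : (∫ x in Ω, ‖gradient φ x‖ ^ 2) ≤ 1 := by
      refine le_trans ?_ hconstr
      apply setIntegral_mono_on hgφ2_int hsum_int hΩm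
      intro x _
      nlinarith [sq_nonneg (φ x)]
    have hmix_int : IntegrableOn (fun x => ‖gradient u x‖ * ‖gradient φ x‖) Ω volume :=
      integ_on hΩb hW hΩW
        (((hgradcu.mono Set.inter_subset_left).norm).mul
          ((hgradcφ.mono Set.inter_subset_right).norm))
    have hinner_int : IntegrableOn
        (fun x => (inner ℝ (gradient u x) (gradient φ x) : ℝ)) Ω volume :=
      integ_on hΩb hW hΩW
        ((hgradcu.mono Set.inter_subset_left).inner (hgradcφ.mono Set.inter_subset_right))
    have h1 : |∫ x in Ω, (inner ℝ (gradient u x) (gradient φ x) : ℝ)|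
        ≤ ∫ x in Ω, ‖gradient u x‖ * ‖gradient φ x‖ := by
      refine le_trans (by
        simpa only [Real.norm_eq_abs] using norm_integral_le_integral_norm (μ := volume.restrict Ω)
          (fun x => (inner ℝ (gradient u x) (gradient φ x) : ℝ))) ?_
      apply setIntegral_mono_on hinner_int.abs hmix_int hΩm
      intro x _
      exact abs_real_inner_le_norm _ _
    have h2 : (∫ x in Ω, ‖gradient u x‖ * ‖gradient φ x‖)
        ≤ Real.sqrt (∫ x in Ω, ‖gradient u x‖ ^ 2)
          * Real.sqrt (∫ x in Ω, ‖gradient φ x‖ ^ 2) := by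
      have := cs_abs (μ := volume.restrict Ω) (f := fun x => ‖gradient u x‖)
        (g := fun x => ‖gradient φ x‖) hgu2_int hgφ2_int hmix_int
      exact le_trans (le_abs_self _) this
    have h3 : Real.sqrt (∫ x in Ω, ‖gradient φ x‖ ^ 2) ≤ 1 := by
      rw [show (1:ℝ) = Real.sqrt 1 by simp]
      exact Real.sqrt_le_sqrt hgφ2_le
    calc r = |∫ x in Ω, (inner ℝ (gradient u x) (gradient φ x) : ℝ)| := hr
    _ ≤ ∫ x in Ω, ‖gradient u x‖ * ‖gradient φ x‖ := h1
    _ ≤ Real.sqrt (∫ x in Ω, ‖gradient u x‖ ^ 2)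
          * Real.sqrt (∫ x in Ω, ‖gradient φ x‖ ^ 2) := h2
    _ ≤ Real.sqrt (∫ x in Ω, ‖gradient u x‖ ^ 2) * 1 :=
        mul_le_mul_of_nonneg_left h3 (Real.sqrt_nonneg _)
    _ = Real.sqrt (∫ x in Ω, ‖gradient u x‖ ^ 2) := mul_one _
  have hsSup0 : 0 ≤ sSup S := le_csSup hbdd h0S
  -- Poincaré
  have hpoin : ∫ x in Ω, u x ^ 2 ≤ K * ∫ x in Ω, ‖gradient u x‖ ^ 2 :=
    poincare hΩo hΩb hΩc hΩne hU hΩU hu hmean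
  by_cases hN : (∫ x in Ω, ‖gradient u x‖ ^ 2) = 0
  · have h0 : ∫ x in Ω, u x ^ 2 = 0 := le_antisymm (by rw [hN] at hpoin; linarith) hL0
    rw [h0, Real.sqrt_zero]
    positivity
  · have hN0 : 0 < ∫ x in Ω, ‖gradient u x‖ ^ 2 := lt_of_le_of_ne hNsq0 (Ne.symm hN)
    set Msq : ℝ := ∫ x in Ω, (u x ^ 2 + ‖gradient u x‖ ^ 2) with hMsqdef
    have hMsq_eq : Msq = (∫ x in Ω, u x ^ 2) + ∫ x in Ω, ‖gradient u x‖ ^ 2 :=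
      integral_add hu2_int hgu2_int
    have hMsq0 : 0 < Msq := by rw [hMsq_eq]; linarith
    set M : ℝ := Real.sqrt Msq with hMdef
    have hM0 : 0 < M := Real.sqrt_pos.2 hMsq0
    have hMsq' : M ^ 2 = Msq := Real.sq_sqrt hMsq0.le
    -- test function
    set φ : EuclideanSpace ℝ (Fin d) → ℝ := fun x => M⁻¹ * u x with hφdef
    have hφC1 : ContDiffOn ℝ 1 φ U := contDiffOn_const.mul hu
    have hgradφ : ∀ x ∈ Ω, gradient φ x = M⁻¹ • gradient u x := by
      intro x hx
      have hdx : DifferentiableAt ℝ u x :=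
        (hu.differentiableOn one_ne_zero).differentiableAt
          (hU.mem_nhds (hΩU (subset_closure hx)))
      have : fderiv ℝ φ x = M⁻¹ • fderiv ℝ u x := fderiv_const_mul hdx M⁻¹
      simp only [gradient, this, _root_.map_smul]
    have hmem : (M⁻¹ * ∫ x in Ω, ‖gradient u x‖ ^ 2) ∈ S := by
      refine ⟨φ, ⟨U, hU, hΩU, hφC1⟩, ?_, ?_⟩
      · have heq : ∀ x ∈ Ω, φ x ^ 2 + ‖gradient φ x‖ ^ 2
            = M⁻¹ ^ 2 * (u x ^ 2 + ‖gradient u x‖ ^ 2) := by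
          intro x hx
          rw [hgradφ x hx]
          simp only [hφdef]
          rw [norm_smul, Real.norm_eq_abs, abs_of_pos (inv_pos.2 hM0)]
          ring
        rw [setIntegral_congr_fun hΩm heq, MeasureTheory.integral_const_mul, ← hMsqdef]
        rw [inv_pow, hMsq']
        rw [inv_mul_cancel₀ hMsq0.ne']
      · have heq : ∀ x ∈ Ω, (inner ℝ (gradient u x) (gradient φ x) : ℝ)
            = M⁻¹ * ‖gradient u x‖ ^ 2 := by
          intro x hx
          rw [hgradφ x hx, real_inner_smul_right, real_inner_self_eq_norm_sq]
        rw [setIntegral_congr_fun hΩm heq, MeasureTheory.integral_const_mul]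
        rw [abs_of_nonneg (by positivity)]
    have hle : M⁻¹ * (∫ x in Ω, ‖gradient u x‖ ^ 2) ≤ sSup S := le_csSup hbdd hmem
    -- M ≤ √(K+1) * √(∫‖∇u‖²)
    have hMle : M ≤ Real.sqrt (K + 1) * Real.sqrt (∫ x in Ω, ‖gradient u x‖ ^ 2) := by
      rw [hMdef, ← Real.sqrt_mul (by linarith)]
      apply Real.sqrt_le_sqrt
      rw [hMsq_eq]
      calc (∫ x in Ω, u x ^ 2) + ∫ x in Ω, ‖gradient u x‖ ^ 2
          ≤ K * (∫ x in Ω, ‖gradient u x‖ ^ 2) + ∫ x in Ω, ‖gradient u x‖ ^ 2 :=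
          add_le_add_left hpoin _
      _ = (K + 1) * ∫ x in Ω, ‖gradient u x‖ ^ 2 := by ring
    have hNu_le : Real.sqrt (∫ x in Ω, ‖gradient u x‖ ^ 2) ≤ Real.sqrt (K + 1) * sSup S := by
      have hNu2 : Real.sqrt (∫ x in Ω, ‖gradient u x‖ ^ 2) ^ 2
          = ∫ x in Ω, ‖gradient u x‖ ^ 2 := Real.sq_sqrt hNsq0
      have hNu0 : 0 < Real.sqrt (∫ x in Ω, ‖gradient u x‖ ^ 2) := Real.sqrt_pos.2 hN0
      have hK1 : 0 < Real.sqrt (K + 1) := Real.sqrt_pos.2 (by linarith)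
      have step0 : Real.sqrt (∫ x in Ω, ‖gradient u x‖ ^ 2) * M
          ≤ (∫ x in Ω, ‖gradient u x‖ ^ 2) * Real.sqrt (K + 1) := by
        calc Real.sqrt (∫ x in Ω, ‖gradient u x‖ ^ 2) * M
            ≤ Real.sqrt (∫ x in Ω, ‖gradient u x‖ ^ 2)
              * (Real.sqrt (K + 1) * Real.sqrt (∫ x in Ω, ‖gradient u x‖ ^ 2)) :=
            mul_le_mul_of_nonneg_left hMle hNu0.le
        _ = (Real.sqrt (∫ x in Ω, ‖gradient u x‖ ^ 2)
              * Real.sqrt (∫ x in Ω, ‖gradient u x‖ ^ 2)) * Real.sqrt (K + 1) := by ring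
        _ = (∫ x in Ω, ‖gradient u x‖ ^ 2) * Real.sqrt (K + 1) := by
            rw [Real.mul_self_sqrt hNsq0]
      have step : Real.sqrt (∫ x in Ω, ‖gradient u x‖ ^ 2) / Real.sqrt (K + 1)
          ≤ M⁻¹ * (∫ x in Ω, ‖gradient u x‖ ^ 2) := by
        rw [div_le_iff₀ hK1, inv_mul_eq_div, div_mul_eq_mul_div, le_div_iff₀ hM0]
        linarith [step0]
      have hfin := le_trans step hle
      rw [div_le_iff₀ hK1] at hfin
      nlinarith [hfin]
    -- final
    calc Real.sqrt (∫ x in Ω, u x ^ 2)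
        ≤ Real.sqrt (K * ∫ x in Ω, ‖gradient u x‖ ^ 2) := Real.sqrt_le_sqrt hpoin
    _ = Real.sqrt K * Real.sqrt (∫ x in Ω, ‖gradient u x‖ ^ 2) := Real.sqrt_mul hK0.le _
    _ ≤ Real.sqrt K * (Real.sqrt (K + 1) * sSup S) :=
        mul_le_mul_of_nonneg_left hNu_le (Real.sqrt_nonneg _)
    _ = Real.sqrt K * Real.sqrt (K + 1) * sSup S := by ring
    _ ≤ (Real.sqrt K * Real.sqrt (K + 1) + 1) * sSup S := by nlinarith [hsSup0]
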